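/- For any dimension d ≥ 1, there exists an informationally complete POVM {E_i}_{i≤N_d} on C^d with N_d = d(2d-1) effects such that Tr(E_i · I/d) = 1/N_d for every effect E_i. -/

import Mathlib

open Matrix
open scoped ComplexOrder

/-- A density matrix on ℂ^d: positive semidefinite with unit trace. -/
def IsDensityMatrix {d : ℕ} (ρ : Matrix (Fin d) (Fin d) ℂ) : Prop :=
  ρ.PosSemidef ∧ ρ.trace = 1

/-- A POVM on ℂ^d with N effects: positive semidefinite operators summing to the identity. -/
def IsPOVM {d N : ℕ} (E : Fin N → Matrix (Fin d) (Fin d) ℂ) : Prop :=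
  (∀ i, (E i).PosSemidef) ∧ ∑ i, E i = 1

/-- Informationally complete: ρ ↦ (Tr(E_i ρ))_i is injective on density matrices. -/
def IsInfoComplete {d N : ℕ} (E : Fin N → Matrix (Fin d) (Fin d) ℂ) : Prop :=
  Set.InjOn (fun ρ : Matrix (Fin d) (Fin d) ℂ => fun i => (E i * ρ).trace)
    {ρ | IsDensityMatrix ρ}

noncomputable section ICAux

namespace ICAux

lemma posSemidef_vmv {d : ℕ} (v : Fin d → ℂ) : (vecMulVec v (star v)).PosSemidef := by
  have : vecMulVec v (star v) = (replicateRow Unit (star v))ᴴ * (replicateRow Unit (star v)) := by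
    rw [conjTranspose_replicateRow, star_star, vecMulVec_eq Unit]
  rw [this]
  exact posSemidef_conjTranspose_mul_self _

lemma posSemidef_real_smul {d : ℕ} {M : Matrix (Fin d) (Fin d) ℂ} (hM : M.PosSemidef)
    {r : ℝ} (hr : 0 ≤ r) : ((r : ℂ) • M).PosSemidef := by
  constructor
  · rw [IsHermitian, conjTranspose_smul, hM.1]; simp [Complex.conj_ofReal]
  · intro x
    have hr' : (0:ℂ) ≤ (r:ℂ) := by exact_mod_cast hr
    exact (hM.smul hr').2 x

lemma trace_vmv {d : ℕ} (v : Fin d → ℂ) (ρ : Matrix (Fin d) (Fin d) ℂ) :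
    (vecMulVec v (star v) * ρ).trace = ∑ b, ∑ a, v a * (starRingEnd ℂ) (v b) * ρ b a := by
  simp [Matrix.trace, Matrix.diag, Matrix.mul_apply, vecMulVec_apply, Finset.mul_sum]
  rw [Finset.sum_comm]

/-- index type -/
abbrev Idx (d : ℕ) := Fin d ⊕ ({p : Fin d × Fin d // p.1 ≠ p.2} × Bool)

def sgn {d : ℕ} (j k : Fin d) : ℂ := if j < k then 1 else -1

def pairVec {d : ℕ} (j k : Fin d) (c : ℂ) : Fin d → ℂ :=
  (Pi.single j 1 : Fin d → ℂ) + c • (Pi.single k 1 : Fin d → ℂ)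

def pairP {d : ℕ} (j k : Fin d) (c : ℂ) : Matrix (Fin d) (Fin d) ℂ :=
  ((2 : ℝ)⁻¹ : ℂ) • vecMulVec (pairVec j k c) (star (pairVec j k c))

def icP (d : ℕ) : Idx d → Matrix (Fin d) (Fin d) ℂ
  | .inl j => vecMulVec (Pi.single j 1 : Fin d → ℂ) (star (Pi.single j 1 : Fin d → ℂ))
  | .inr (p, false) => pairP p.1.1 p.1.2 (sgn p.1.1 p.1.2)
  | .inr (p, true) => pairP p.1.1 p.1.2 Complex.I

lemma icP_posSemidef (d : ℕ) (α : Idx d) : (icP d α).PosSemidef := by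
  have h2 : (0:ℝ) ≤ (2:ℝ)⁻¹ := by norm_num
  rcases α with j | ⟨⟨⟨j, k⟩, hjk⟩, _ | _⟩
  · exact posSemidef_vmv _
  · rw [icP, pairP, ← Complex.ofReal_inv]; exact posSemidef_real_smul (posSemidef_vmv _) h2
  · rw [icP, pairP, ← Complex.ofReal_inv]; exact posSemidef_real_smul (posSemidef_vmv _) h2

lemma trace_single {d : ℕ} (j : Fin d) (ρ : Matrix (Fin d) (Fin d) ℂ) :
    (vecMulVec (Pi.single j 1 : Fin d → ℂ) (star (Pi.single j 1 : Fin d → ℂ)) * ρ).trace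
    = ρ j j := by
  rw [trace_vmv]
  simp only [Pi.single_apply, apply_ite (starRingEnd ℂ), _root_.map_one, _root_.map_zero]
  simp [ite_mul, mul_ite, Finset.sum_ite_eq, Finset.sum_ite_eq']

lemma trace_pairP {d : ℕ} (j k : Fin d) (c : ℂ) (ρ : Matrix (Fin d) (Fin d) ℂ) :
    (pairP j k c * ρ).trace
    = ((2 : ℝ)⁻¹ : ℂ) * (ρ j j + (starRingEnd ℂ) c * ρ k j + c * ρ j k
        + (c * (starRingEnd ℂ) c) * ρ k k) := by
  rw [pairP, smul_mul_assoc, trace_smul, smul_eq_mul]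
  congr 1
  rw [pairVec, trace_vmv]
  simp only [Pi.add_apply, Pi.smul_apply, Pi.single_apply, smul_eq_mul, map_add, _root_.map_mul,
    apply_ite (starRingEnd ℂ), _root_.map_one, _root_.map_zero]
  simp only [add_mul, mul_add, ite_mul, mul_ite, one_mul, mul_one, zero_mul, mul_zero,
    Finset.sum_add_distrib, Finset.sum_ite_eq, Finset.sum_ite_eq', Finset.mem_univ, if_true,
    zero_add, add_zero]
  simp [Finset.sum_add_distrib]
  ring

lemma icP_trace (d : ℕ) (α : Idx d) : (icP d α).trace = 1 := by
  have key : ∀ M : Matrix (Fin d) (Fin d) ℂ, M.trace = (M * 1).trace := by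
    intro M; rw [mul_one]
  rcases α with j | ⟨⟨⟨j, k⟩, hjk⟩, b⟩
  · rw [icP, key, trace_single]; simp
  · cases b
    · rw [icP, key, trace_pairP]
      simp only [one_apply, hjk, Ne.symm hjk, if_false, if_true, sgn]
      split <;> norm_num
    · rw [icP, key, trace_pairP]
      simp [one_apply, hjk, Ne.symm hjk]
      norm_num

lemma icP_inj {d : ℕ} (ρ σ : Matrix (Fin d) (Fin d) ℂ)
    (h : ∀ α : Idx d, (icP d α * ρ).trace = (icP d α * σ).trace) : ρ = σ := by
  have hdiag : ∀ j, ρ j j = σ j j := by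
    intro j
    have := h (.inl j)
    rwa [icP, trace_single, trace_single] at this
  ext a b
  by_cases hab : a = b
  · subst hab; exact hdiag a
  · have h3 := h (.inr (⟨(a, b), hab⟩, false))
    have h4 := h (.inr (⟨(a, b), hab⟩, true))
    simp only [icP] at h3 h4
    rw [trace_pairP, trace_pairP] at h3
    rw [trace_pairP, trace_pairP] at h4
    have e1 := hdiag a
    have e2 := hdiag b
    push_cast at h3 h4
    have hI : Complex.I * Complex.I = -1 := Complex.I_mul_I
    have h6 : ρ a b - ρ b a = σ a b - σ b a := by
      have h5 : Complex.I * (ρ a b - ρ b a) = Complex.I * (σ a b - σ b a) := by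
        simp only [Complex.conj_I] at h4
        linear_combination 2 * h4 - e1 + (ρ b b - σ b b) * hI - e2
      exact mul_left_cancel₀ Complex.I_ne_zero h5
    have h7 : ρ a b + ρ b a = σ a b + σ b a := by
      by_cases hlt : a < b
      · simp only [sgn, if_pos hlt, _root_.map_one] at h3
        linear_combination 2 * h3 - e1 - e2
      · simp only [sgn, if_neg hlt, _root_.map_neg, _root_.map_one] at h3
        linear_combination e1 + e2 - 2 * h3
    linear_combination (h6 + h7) / 2

lemma conj_sgn {d : ℕ} (j k : Fin d) : (starRingEnd ℂ) (sgn j k) = sgn j k := by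
  unfold sgn; split <;> simp

lemma sgn_mul_sgn {d : ℕ} (j k : Fin d) : sgn j k * sgn j k = 1 := by
  unfold sgn; split <;> norm_num

lemma sgn_self {d : ℕ} (j : Fin d) : sgn j j = -1 := by
  simp [sgn]

lemma pairP_apply {d : ℕ} (j k : Fin d) (c : ℂ) (a b : Fin d) :
    pairP j k c a b
    = ((2 : ℝ)⁻¹ : ℂ) * (((if a = j then 1 else 0) + c * (if a = k then 1 else 0))
        * ((if b = j then 1 else 0) + (starRingEnd ℂ) c * (if b = k then 1 else 0))) := by
  simp [pairP, pairVec, vecMulVec_apply, Pi.single_apply, mul_comm,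
    apply_ite (starRingEnd ℂ)]

lemma single_vmv_apply {d : ℕ} (j a b : Fin d) :
    vecMulVec (Pi.single j 1 : Fin d → ℂ) (star (Pi.single j 1 : Fin d → ℂ)) a b
    = (if a = j then 1 else 0) * (if b = j then 1 else 0) := by
  simp [vecMulVec_apply, Pi.single_apply, apply_ite (starRingEnd ℂ)]

lemma sum_icP (d : ℕ) :
    ∑ α : Idx d, icP d α = (2 * (d : ℂ) - 1) • (1 : Matrix (Fin d) (Fin d) ℂ) := by
  ext a b
  rw [Matrix.sum_apply, Fintype.sum_sum_type, Fintype.sum_prod_type]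
  simp only [Fintype.sum_bool]
  have hstep : ∀ p : {p : Fin d × Fin d // p.1 ≠ p.2},
      icP d (.inr (p, true)) a b + icP d (.inr (p, false)) a b
        = (fun q : Fin d × Fin d =>
            pairP q.1 q.2 Complex.I a b + pairP q.1 q.2 (sgn q.1 q.2) a b) p.1 := by
    intro p; rfl
  rw [Finset.sum_congr rfl (fun p _ => hstep p)]
  rw [show (∑ p : {p : Fin d × Fin d // p.1 ≠ p.2}, (fun q : Fin d × Fin d =>
            pairP q.1 q.2 Complex.I a b + pairP q.1 q.2 (sgn q.1 q.2) a b) p.1)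
      = ∑ q : Fin d × Fin d, (if q.1 ≠ q.2 then
            pairP q.1 q.2 Complex.I a b + pairP q.1 q.2 (sgn q.1 q.2) a b else 0) by
    rw [← Finset.sum_filter]
    exact (Finset.sum_subtype (p := fun q : Fin d × Fin d => q.1 ≠ q.2)
      (Finset.univ.filter fun q : Fin d × Fin d => q.1 ≠ q.2)
      (fun x => by simp)
      (fun q => pairP q.1 q.2 Complex.I a b + pairP q.1 q.2 (sgn q.1 q.2) a b)).symm]
  have hite : ∀ (u v : Fin d) (x : ℂ), (if u ≠ v then x else 0) = x - (if u = v then x else 0) := by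
    intros u v x
    by_cases h : u = v <;> simp [h]
  simp only [hite]
  rw [Finset.sum_sub_distrib]
  simp only [icP, single_vmv_apply, pairP_apply, Fintype.sum_prod_type,
    Finset.sum_ite_eq, Finset.mem_univ, if_true, conj_sgn, sgn_self, Complex.conj_I]
  simp only [add_mul, mul_add, ite_mul, mul_ite, one_mul, mul_one, zero_mul, mul_zero,
    Finset.sum_add_distrib, Finset.sum_ite_eq, Finset.sum_ite_eq', Finset.mem_univ, if_true,
    zero_add, add_zero, Finset.sum_sub_distrib, Finset.mul_sum, Finset.sum_const,
    Finset.card_univ, Fintype.card_fin, nsmul_eq_mul]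
  have hadd : ∀ (u v : Fin d) (x y : ℂ),
      (if u = v then x + y else 0) = (if u = v then x else 0) + (if u = v then y else 0) := by
    intros u v x y; split <;> simp
  simp only [hadd, mul_neg, Complex.I_mul_I, neg_neg, sgn_mul_sgn, Finset.sum_add_distrib,
    Finset.sum_ite_eq, Finset.sum_ite_eq', Finset.mem_univ, if_true, Finset.sum_const,
    Finset.card_univ, Fintype.card_fin, nsmul_eq_mul, Matrix.smul_apply, one_apply, smul_eq_mul]
  have hpull : ∀ (u v : Fin d) (f : Fin d → ℂ),
      (∑ x, if u = v then f x else 0) = if u = v then ∑ x, f x else 0 := by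
    intros u v f; split <;> simp
  simp only [hpull, mul_ite, ite_mul, mul_zero, zero_mul, Finset.sum_ite_eq, Finset.sum_ite_eq',
    Finset.mem_univ, if_true, hadd, Finset.sum_add_distrib, Finset.sum_const, Finset.card_univ,
    Fintype.card_fin, nsmul_eq_mul]
  by_cases hab : a = b
  · subst hab
    simp [sgn_self]
    ring
  · have hs : sgn a b + sgn b a = 0 := by
      unfold sgn
      rcases lt_trichotomy a b with h | h | h
      · simp [h, not_lt.2 h.le]
      · exact absurd h hab
      · simp [h, not_lt.2 h.le]
    simp only [hab, if_false, Ne.symm hab]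
    push_cast
    linear_combination ((2:ℂ))⁻¹ * hs

def diag_equiv (d : ℕ) : {p : Fin d × Fin d // p.1 = p.2} ≃ Fin d where
  toFun x := x.1.1
  invFun j := ⟨(j, j), rfl⟩
  left_inv := by rintro ⟨⟨j, k⟩, h⟩; simp at h; subst h; rfl
  right_inv j := rfl

lemma card_idx (d : ℕ) (hd : 1 ≤ d) : Fintype.card (Idx d) = d * (2 * d - 1) := by
  have h1 : Fintype.card {p : Fin d × Fin d // p.1 = p.2} = d := by
    rw [Fintype.card_congr (diag_equiv d), Fintype.card_fin]
  have h2 : Fintype.card {p : Fin d × Fin d // p.1 ≠ p.2} = d * d - d := by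
    rw [Fintype.card_subtype_compl, h1]
    simp [Fintype.card_prod]
  rw [Fintype.card_sum, Fintype.card_prod, Fintype.card_bool, Fintype.card_fin, h2]
  obtain ⟨e, rfl⟩ := Nat.exists_eq_add_of_le hd
  have h3 : (1 + e) * (1 + e) - (1 + e) = (1 + e) * e := by
    have : (1 + e) * (1 + e) = (1 + e) * e + (1 + e) := by ring
    rw [this, Nat.add_sub_cancel]
  have h4 : 2 * (1 + e) - 1 = 1 + 2 * e := by omega
  rw [h3, h4]
  ring

end ICAux

end ICAux

/-- for any d ≥ 1 there is an informationally complete POVM with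
N_d = d(2d-1) effects satisfying Tr(E_i · I/d) = 1/N_d for every effect. -/
theorem exists_infoComplete_unbiased_POVM (d : ℕ) (hd : 1 ≤ d) :
    ∃ E : Fin (d * (2 * d - 1)) → Matrix (Fin d) (Fin d) ℂ,
      IsPOVM E ∧ IsInfoComplete E ∧
      ∀ i, (E i * (((d : ℂ)⁻¹) • (1 : Matrix (Fin d) (Fin d) ℂ))).trace
            = ((d * (2 * d - 1) : ℕ) : ℂ)⁻¹ := by
  classical
  let eqv : Fin (d * (2 * d - 1)) ≃ ICAux.Idx d :=
    Fintype.equivOfCardEq (by rw [Fintype.card_fin, ICAux.card_idx d hd])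
  have h21 : 1 ≤ 2 * d := by omega
  have hcast2 : ((2 * d - 1 : ℕ) : ℂ) = 2 * (d : ℂ) - 1 := by
    push_cast [Nat.cast_sub h21]
    ring
  have hc0 : (2 * (d : ℂ) - 1) ≠ 0 := by
    rw [← hcast2]
    exact Nat.cast_ne_zero.mpr (by omega)
  set c : ℂ := (2 * (d : ℂ) - 1)⁻¹ with hc
  refine ⟨fun i => c • ICAux.icP d (eqv i), ⟨?_, ?_⟩, ?_, ?_⟩
  · intro i
    have hr : (0:ℝ) ≤ ((2 * (d:ℝ) - 1))⁻¹ := by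
      have h1 : (1:ℝ) ≤ (d:ℝ) := by exact_mod_cast hd
      have h2 : (0:ℝ) < 2 * (d:ℝ) - 1 := by linarith
      positivity
    have hcast : ((((2 * (d:ℝ) - 1))⁻¹ : ℝ) : ℂ) = c := by
      rw [hc]; push_cast; ring
    rw [← hcast]
    exact ICAux.posSemidef_real_smul (ICAux.icP_posSemidef d (eqv i)) hr
  · rw [← Finset.smul_sum, Equiv.sum_comp eqv (ICAux.icP d), ICAux.sum_icP, smul_smul,
      hc, inv_mul_cancel₀ hc0, one_smul]
  · intro ρ hρ σ hσ h
    apply ICAux.icP_inj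
    intro α
    have h1 := congrFun h (eqv.symm α)
    simp only [Equiv.apply_symm_apply, smul_mul_assoc, trace_smul, smul_eq_mul] at h1
    exact mul_left_cancel₀ (inv_ne_zero hc0) h1
  · intro i
    simp only [Matrix.mul_smul, Matrix.mul_one, trace_smul, smul_mul_assoc, smul_eq_mul,
      ICAux.icP_trace, mul_one]
    rw [Nat.cast_mul, mul_inv, hc, ← hcast2]
    ring
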